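/- Let a: ℝ → ℝ be differentiable, F satisfy F' = a, and let X = {X_1,…,X_N} ⊂ K_a with X_i = P(u_i, v_i). If the ordered family (X_1,…,X_N) forms a T_N configuration, then for every i = 1,…,N the ordered family (T_1^i,…,T_N^i) also forms a T_N configuration (not necessarily contained in K_a). -/
import Mathlib


open Matrix

noncomputable section

/-- The map `P(u,v)` into `ℝ^{3×2}` from the paper. -/
def Pmat (a F : ℝ → ℝ) (u v : ℝ) : Matrix (Fin 3) (Fin 2) ℝ :=
  !![u, v; a v, u; u * a v, u ^ 2 / 2 + F v]

/-- The ordered family `X` forms a `T_N` configuration. -/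
def IsTNConfig {m n N : ℕ} (X : Fin N → Matrix (Fin m) (Fin n) ℝ) : Prop :=
  4 ≤ N ∧ Function.Injective X ∧
    (∀ i j, i ≠ j → (X i - X j).rank ≠ 1) ∧
    ∃ (B : Matrix (Fin m) (Fin n) ℝ) (C : Fin N → Matrix (Fin m) (Fin n) ℝ)
      (κ : Fin N → ℝ),
      (∀ i, 1 < κ i) ∧ (∀ i, (C i).rank = 1) ∧ (∑ i, C i = 0) ∧
      ∀ i, X i = B + (∑ j ∈ Finset.univ.filter (fun j => j < i), C j) + κ i • C i

/-- The family `X` has an order (enumeration) that forms a `T_N` configuration. -/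
def HasTNOrder {m n N : ℕ} (X : Fin N → Matrix (Fin m) (Fin n) ℝ) : Prop :=
  ∃ σ : Equiv.Perm (Fin N), IsTNConfig (X ∘ σ)

/-- The matrix `A_X - Π^N(Q) ∈ ℝ^{3 × 2N}`, with the `2N` columns indexed by
`Fin N ⊕ Fin N`: the first `N` columns are `(u_j, a(v_j), u_j a(v_j))ᵀ - (first column of Q)`
and the last `N` columns are `(v_j, u_j, u_j²/2 + F(v_j))ᵀ - (second column of Q)`. -/
def AmatDiff (a F : ℝ → ℝ) {N : ℕ} (u v : Fin N → ℝ)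
    (Q : Matrix (Fin 3) (Fin 2) ℝ) : Matrix (Fin 3) (Fin N ⊕ Fin N) ℝ :=
  Matrix.of fun i => Sum.elim
    (fun j => Pmat a F (u j) (v j) i 0 - Q i 0)
    (fun j => Pmat a F (u j) (v j) i 1 - Q i 1)

/-- **Lemma 7 ([LP20on, Lemma 9]).** If `X_i = P(u_i, v_i) ∈ K_a` and `(X_1,…,X_N)`
forms a `T_N` configuration, then for every `i` the translated family
`(T^i_1,…,T^i_N)`, with `T^i_j` built from `h^i_j = u_j - u_i`, `r^i_j = v_j - v_i`,
`a^i(t) = a(t + v_i) - a(v_i)` and `F^i(t) = F(t + v_i) - F(v_i) - a(v_i) t`,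
also forms a `T_N` configuration. -/
theorem stmt_4 (a F : ℝ → ℝ)
    (ha : Differentiable ℝ a)
    (hF : ∀ x : ℝ, HasDerivAt F (a x) x)
    {N : ℕ} (u v : Fin N → ℝ)
    (X : Fin N → Matrix (Fin 3) (Fin 2) ℝ)
    (hX : ∀ i, X i = Pmat a F (u i) (v i))
    (hTN : IsTNConfig X) :
    ∀ i, IsTNConfig (fun j =>
      Pmat (fun t => a (t + v i) - a (v i))
        (fun t => F (t + v i) - F (v i) - a (v i) * t)
        (u j - u i) (v j - v i)) := by
  intro i
  set M : Matrix (Fin 3) (Fin 3) ℝ := !![1,0,0;0,1,0;-(a (v i)), -(u i),1] with hM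
  have hdet : M.det = 1 := by simp [hM, Matrix.det_fin_three]
  have hdu : IsUnit M.det := by rw [hdet]; exact isUnit_one
  have key : ∀ j, Pmat (fun t => a (t + v i) - a (v i))
        (fun t => F (t + v i) - F (v i) - a (v i) * t)
        (u j - u i) (v j - v i) = M * (X j - X i) := by
    intro j
    rw [hX j, hX i]
    ext p q
    fin_cases p <;> fin_cases q <;>
      simp [hM, Pmat, Matrix.mul_apply, Fin.sum_univ_three, Matrix.sub_apply] <;>
      ring_nf
  simp only [key]
  obtain ⟨hN, hinj, hrank, B, C, κ, hκ, hC1, hCsum, hrel⟩ := hTN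
  have hMinj : ∀ A B : Matrix (Fin 3) (Fin 2) ℝ, M * A = M * B → A = B := by
    intro A B h
    have := congrArg (fun Z => M⁻¹ * Z) h
    simpa [← Matrix.mul_assoc, Matrix.nonsing_inv_mul M hdu] using this
  refine ⟨hN, ?_, ?_, M * (B - X i), fun j => M * C j, κ, hκ, ?_, ?_, ?_⟩
  · intro j k h
    exact hinj (sub_left_injective (hMinj _ _ h))
  · intro j k hjk
    rw [← Matrix.mul_sub]
    have : X j - X i - (X k - X i) = X j - X k := by abel
    rw [this, Matrix.rank_mul_eq_right_of_isUnit_det _ _ hdu]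
    exact hrank j k hjk
  · intro j
    rw [Matrix.rank_mul_eq_right_of_isUnit_det _ _ hdu]
    exact hC1 j
  · rw [← Matrix.mul_sum, hCsum, Matrix.mul_zero]
  · intro j
    rw [← Matrix.mul_sum, ← Matrix.mul_smul, ← Matrix.mul_add, ← Matrix.mul_add]
    show M * (X j - X i) = _
    congr 1
    rw [hrel j]
    abel
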